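/- With φ_k as in the determinantal construction (φ_k = (ρ/N)^{1/2} e^{i(kf(x₁) − M(x₁) + S)}), Σ_{k=0}^{N−1} Im(conj(φ_k) ∇φ_k) = ρ ∇S + ρ(((N−1)/2)(df/dx₁) − dM/dx₁) ê_x, where ê_x is the first standard basis vector. In particular, choosing ∇S = jᵖ/ρ and M = ((N−1)/2) f, the resulting determinant ψ_D has paramagnetic current jᵖ_{ψ_D} = jᵖ. -/

import Mathlib

open MeasureTheory

/-- Orbitals `φ_k = (ρ/N)^{1/2} e^{i(k f(x₁) − M(x₁) + S(x))}`, written with `r = ρ^{1/2}`. -/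
noncomputable def orb (N : ℕ) (r : EuclideanSpace ℝ (Fin 3) → ℝ) (f M : ℝ → ℝ)
    (S : EuclideanSpace ℝ (Fin 3) → ℝ) (k : ℕ) (x : EuclideanSpace ℝ (Fin 3)) : ℂ :=
  ((r x / Real.sqrt N : ℝ) : ℂ) *
    Complex.exp (Complex.I * (((k : ℝ) * f (x 0) - M (x 0) + S x : ℝ) : ℂ))

lemma orb_term (N : ℕ)
    (r S : EuclideanSpace ℝ (Fin 3) → ℝ) (f f' M M' : ℝ → ℝ)
    (hr : Differentiable ℝ r) (hS : Differentiable ℝ S)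
    (hf : ∀ t, HasDerivAt f (f' t) t) (hM : ∀ t, HasDerivAt M (M' t) t)
    (k : ℕ) (x v : EuclideanSpace ℝ (Fin 3)) :
    ((starRingEnd ℂ) (orb N r f M S k x) * fderiv ℝ (orb N r f M S k) x v).im
      = (r x / Real.sqrt N) ^ 2 *
          (((k : ℝ) * f' (x 0) - M' (x 0)) * v 0 + fderiv ℝ S x v) := by
  set P : EuclideanSpace ℝ (Fin 3) →L[ℝ] ℝ := EuclideanSpace.proj (0 : Fin 3) with hP
  set θ : EuclideanSpace ℝ (Fin 3) → ℝ := fun y => (k : ℝ) * f (y 0) - M (y 0) + S y with hθdef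
  set Dθ : EuclideanSpace ℝ (Fin 3) →L[ℝ] ℝ :=
    (((k : ℝ) • (f' (x 0) • P) - M' (x 0) • P) + fderiv ℝ S x) with hDθ
  have hcoord : HasFDerivAt (fun y : EuclideanSpace ℝ (Fin 3) => y 0) P x := P.hasFDerivAt
  have hf1 : HasFDerivAt (fun y : EuclideanSpace ℝ (Fin 3) => f (y 0)) (f' (x 0) • P) x :=
    (hf (x 0)).comp_hasFDerivAt x hcoord
  have hM1 : HasFDerivAt (fun y : EuclideanSpace ℝ (Fin 3) => M (y 0)) (M' (x 0) • P) x :=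
    (hM (x 0)).comp_hasFDerivAt x hcoord
  have hθ : HasFDerivAt θ Dθ x := ((hf1.const_mul ((k : ℝ))).sub hM1).add (hS x).hasFDerivAt
  have hc : HasFDerivAt (fun y => ((r y / Real.sqrt N : ℝ) : ℂ))
      (Complex.ofRealCLM.comp ((Real.sqrt N)⁻¹ • fderiv ℝ r x)) x := by
    have h1 : HasFDerivAt (fun y => r y / Real.sqrt N) ((Real.sqrt N)⁻¹ • fderiv ℝ r x) x := by
      simpa [div_eq_mul_inv, smul_smul, mul_comm] using
        ((hr x).hasFDerivAt.mul_const ((Real.sqrt N)⁻¹))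
    exact Complex.ofRealCLM.hasFDerivAt.comp x h1
  have hg : HasFDerivAt (fun y => Complex.I * ((θ y : ℝ) : ℂ))
      (Complex.I • (Complex.ofRealCLM.comp Dθ)) x :=
    (Complex.ofRealCLM.hasFDerivAt.comp x hθ).const_mul Complex.I
  have he : HasFDerivAt (fun y => Complex.exp (Complex.I * ((θ y : ℝ) : ℂ)))
      (Complex.exp (Complex.I * ((θ x : ℝ) : ℂ)) • (Complex.I • (Complex.ofRealCLM.comp Dθ))) x :=
    hg.cexp
  have horb : HasFDerivAt (orb N r f M S k)
      (((r x / Real.sqrt N : ℝ) : ℂ) •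
          (Complex.exp (Complex.I * ((θ x : ℝ) : ℂ)) • (Complex.I • (Complex.ofRealCLM.comp Dθ)))
        + Complex.exp (Complex.I * ((θ x : ℝ) : ℂ)) •
          (Complex.ofRealCLM.comp ((Real.sqrt N)⁻¹ • fderiv ℝ r x))) x := hc.mul he
  rw [horb.fderiv]
  have hθv : Dθ v = ((k : ℝ) * f' (x 0) - M' (x 0)) * v 0 + fderiv ℝ S x v := by
    simp [hDθ, hP]; ring
  have hE : (starRingEnd ℂ) (Complex.exp (Complex.I * ((θ x : ℝ) : ℂ))) *
      Complex.exp (Complex.I * ((θ x : ℝ) : ℂ)) = 1 := by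
    rw [← Complex.exp_conj, ← Complex.exp_add]
    rw [show (starRingEnd ℂ) (Complex.I * ((θ x : ℝ) : ℂ)) = -(Complex.I * ((θ x : ℝ) : ℂ)) by
      simp [map_mul, Complex.conj_I]]
    simp
  set a : ℝ := r x / Real.sqrt N with ha
  set E : ℂ := Complex.exp (Complex.I * ((θ x : ℝ) : ℂ)) with hE0
  set b : ℝ := ((Real.sqrt N)⁻¹ • fderiv ℝ r x) v with hb
  have key : (starRingEnd ℂ) (orb N r f M S k x) *
      ((((a : ℝ) : ℂ) • (E • (Complex.I • (Complex.ofRealCLM.comp Dθ)))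
        + E • (Complex.ofRealCLM.comp ((Real.sqrt N)⁻¹ • fderiv ℝ r x))) v)
      = (((a : ℝ) : ℂ) * (a : ℂ)) * (Complex.I * ((Dθ v : ℝ) : ℂ)) + ((a : ℝ) : ℂ) * (b : ℂ) := by
    have hodef : orb N r f M S k x = ((a : ℝ) : ℂ) * E := rfl
    rw [hodef]
    simp only [ContinuousLinearMap.add_apply, ContinuousLinearMap.smul_apply,
      ContinuousLinearMap.coe_comp', Function.comp_apply, Complex.ofRealCLM_apply,
      smul_eq_mul, map_mul, Complex.conj_ofReal, ← hb]
    have h2 : ((a:ℂ)) * (starRingEnd ℂ) E * ((a:ℂ) * (E * (Complex.I * ((Dθ v : ℝ):ℂ))) + E * (b:ℂ))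
        = ((starRingEnd ℂ) E * E) * ((a:ℂ) * (a:ℂ) * (Complex.I * ((Dθ v : ℝ):ℂ)) + (a:ℂ) * (b:ℂ)) := by
      ring
    rw [h2, hE, one_mul]
  rw [key]
  have him : ((((a : ℝ) : ℂ) * (a : ℂ)) * (Complex.I * ((Dθ v : ℝ) : ℂ))
      + ((a : ℝ) : ℂ) * (b : ℂ)).im = a * a * Dθ v := by
    simp [Complex.add_im, Complex.mul_im, Complex.mul_re]
  rw [him, hθv]
  ring

/-- `Σ_{k<N} Im(conj(φ_k) ∇φ_k) = ρ ∇S + ρ(((N−1)/2) f' − M') ê₁` (evaluated in an arbitrary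
direction `v`, the `ê₁` term contributing `v 0`); in particular with `M' = ((N−1)/2) f'`
the sum equals `ρ ∇S`, i.e. the paramagnetic current of the determinant is `ρ ∇S = jᵖ`. -/
theorem stmt14 (N : ℕ) (hN : 1 ≤ N)
    (r S : EuclideanSpace ℝ (Fin 3) → ℝ) (f f' M M' : ℝ → ℝ)
    (hr : Differentiable ℝ r) (hS : Differentiable ℝ S)
    (hf : ∀ t, HasDerivAt f (f' t) t) (hM : ∀ t, HasDerivAt M (M' t) t) :
    (∀ (x v : EuclideanSpace ℝ (Fin 3)),
        ∑ k ∈ Finset.range N,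
            ((starRingEnd ℂ) (orb N r f M S k x) * fderiv ℝ (orb N r f M S k) x v).im
          = r x ^ 2 * fderiv ℝ S x v
            + r x ^ 2 * (((N : ℝ) - 1) / 2 * f' (x 0) - M' (x 0)) * v 0) ∧
      ((∀ t, M' t = ((N : ℝ) - 1) / 2 * f' t) →
        ∀ (x v : EuclideanSpace ℝ (Fin 3)),
          ∑ k ∈ Finset.range N,
              ((starRingEnd ℂ) (orb N r f M S k x) * fderiv ℝ (orb N r f M S k) x v).im
            = r x ^ 2 * fderiv ℝ S x v) := by
  have hN0 : (N : ℝ) ≠ 0 := by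
    have : (0 : ℝ) < N := by exact_mod_cast hN
    linarith
  have hsum : ∑ k ∈ Finset.range N, (k : ℝ) = (N : ℝ) * ((N : ℝ) - 1) / 2 := by
    have h := Finset.sum_range_id_mul_two N
    have h2 := congrArg (Nat.cast : ℕ → ℝ) h
    push_cast [Nat.cast_sub hN] at h2
    linarith
  have main : ∀ (x v : EuclideanSpace ℝ (Fin 3)),
      ∑ k ∈ Finset.range N,
          ((starRingEnd ℂ) (orb N r f M S k x) * fderiv ℝ (orb N r f M S k) x v).im
        = r x ^ 2 * fderiv ℝ S x v
          + r x ^ 2 * (((N : ℝ) - 1) / 2 * f' (x 0) - M' (x 0)) * v 0 := by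
    intro x v
    have h1 : ∀ k ∈ Finset.range N,
        ((starRingEnd ℂ) (orb N r f M S k x) * fderiv ℝ (orb N r f M S k) x v).im
          = r x ^ 2 / N * ((k : ℝ) * (f' (x 0) * v 0) + (fderiv ℝ S x v - M' (x 0) * v 0)) := by
      intro k _
      rw [orb_term N r S f f' M M' hr hS hf hM k x v, div_pow,
        Real.sq_sqrt (by positivity : (0:ℝ) ≤ (N:ℝ))]
      ring
    rw [Finset.sum_congr rfl h1, ← Finset.mul_sum, Finset.sum_add_distrib, ← Finset.sum_mul,
      Finset.sum_const, Finset.card_range, nsmul_eq_mul, hsum]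
    field_simp
    ring
  exact ⟨main, fun hMp x v => by rw [main x v, hMp (x 0)]; ring⟩
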